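/- Let Φ : ℝ^d → [0,∞) be an N_∞ function. Then for every Λ with 0 < Λ < 1 and every y ∈ ℝ^d one has Φ*(∇Φ(y)) ≤ (Λ/(1−Λ)) · Φ(y/Λ), where Φ* is the complementary function of Φ. In particular, the Lagrangian L(t,x,y) = Φ(y) + F(t,x), for any F satisfying conditions (C) and (A), satisfies the structure condition (S) for every Λ < 1. -/

import Mathlib

open MeasureTheory Filter Set
open scoped ENNReal RealInnerProductSpace Topology

noncomputable section

/-- `ℝ^d` with the euclidean norm. -/
abbrev Ed (d : ℕ) : Type := EuclideanSpace ℝ (Fin d)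

/-- `Φ` is an `N_∞` function: differentiable, convex, nonnegative, vanishing exactly at `0`,
even, and superlinear at infinity. -/
def IsNInf {m : ℕ} (Φ : Ed m → ℝ) : Prop :=
  Differentiable ℝ Φ ∧ ConvexOn ℝ Set.univ Φ ∧ (∀ y, 0 ≤ Φ y) ∧ Φ 0 = 0 ∧
    (∀ y, y ≠ 0 → 0 < Φ y) ∧ (∀ y, Φ (-y) = Φ y) ∧
    Tendsto (fun y => Φ y / ‖y‖) (comap (fun y : Ed m => ‖y‖) atTop) atTop

variable {d : ℕ}

/-- The modular `ρ_Φ(u) = ∫_0^T Φ(u(t)) dt`, as an extended nonnegative real. -/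
def rhoE (T : ℝ) (Φ : Ed d → ℝ) (u : ℝ → Ed d) : ℝ≥0∞ :=
  ∫⁻ t in Icc (0:ℝ) T, ENNReal.ofReal (Φ (u t))

/-- `u ∈ L^Φ([0,T], ℝ^d)`. -/
def MemLphi (T : ℝ) (Φ : Ed d → ℝ) (u : ℝ → Ed d) : Prop :=
  AEMeasurable u (volume.restrict (Icc (0:ℝ) T)) ∧
    ∃ l : ℝ, 0 < l ∧ rhoE T Φ (fun t => l • u t) < ⊤

/-- The Luxemburg norm of `u` on `[0,T]`. -/
def luxNorm (T : ℝ) (Φ : Ed d → ℝ) (u : ℝ → Ed d) : ℝ :=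
  sInf {l : ℝ | 0 < l ∧ rhoE T Φ (fun t => l⁻¹ • u t) ≤ 1}

/-- `u ∈ W^1L^Φ([0,T], ℝ^d)` with a.e. derivative `u'` : `u` is absolutely continuous,
being the integral of the (integrable) function `u'`, and `u' ∈ L^Φ`. -/
def MemW1Lphi (T : ℝ) (Φ : Ed d → ℝ) (u u' : ℝ → Ed d) : Prop :=
  IntegrableOn u' (Icc (0:ℝ) T) ∧ MemLphi T Φ u' ∧
    ∀ t ∈ Icc (0:ℝ) T, u t = u 0 + ∫ s in (0:ℝ)..t, u' s

/-- The complementary (conjugate) function `Φ*(ζ) = sup_y (y⬝ζ - Φ(y))`. -/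
def conjFn (Φ : Ed d → ℝ) (z : Ed d) : ℝ := ⨆ y : Ed d, (⟪y, z⟫ - Φ y)

/-- Condition (C): `F` is differentiable in `x` for a.e. `t`, and `F`, `∇ₓF` are
Carathéodory functions. -/
def CondC (T : ℝ) (F : ℝ → Ed d → ℝ) : Prop :=
  (∀ x, Measurable fun t => F t x) ∧ (∀ x, Measurable fun t => gradient (F t) x) ∧
    ∀ᵐ t ∂(volume.restrict (Icc (0:ℝ) T)),
      Differentiable ℝ (F t) ∧ Continuous (F t) ∧ Continuous (gradient (F t))

/-- Condition (A): `|F(t,x)| + |∇ₓF(t,x)| ≤ a(x) b(t)`. -/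
def CondA (T : ℝ) (F : ℝ → Ed d → ℝ) : Prop :=
  ∃ a : Ed d → ℝ, ∃ b : ℝ → ℝ, Continuous a ∧ (∀ x, 0 ≤ a x) ∧
    IntegrableOn b (Icc (0:ℝ) T) ∧ (∀ t, 0 ≤ b t) ∧
    ∀ᵐ t ∂(volume.restrict (Icc (0:ℝ) T)), ∀ x, |F t x| + ‖gradient (F t) x‖ ≤ a x * b t

/-- Condition (B): `Φ*(∇ₓF(t,x)/d(t)) ≤ Φ₀(x) + 1` with `d ∈ L¹`, `d ≥ 1`. -/
def CondB (T : ℝ) (Φ Φ0 : Ed d → ℝ) (F : ℝ → Ed d → ℝ) : Prop :=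
  ∃ dd : ℝ → ℝ, IntegrableOn dd (Icc (0:ℝ) T) ∧ (∀ t, 1 ≤ dd t) ∧
    ∀ᵐ t ∂(volume.restrict (Icc (0:ℝ) T)), ∀ x,
      conjFn Φ ((dd t)⁻¹ • gradient (F t) x) ≤ Φ0 x + 1

/-- The action integral `I(u) = ∫_0^T [Φ(u'(t)) + F(t,u(t))] dt`, valued in `EReal`
(the value `+∞` is allowed, coming from the nonnegative part `∫ Φ(u')`). -/
def actionI (T : ℝ) (Φ : Ed d → ℝ) (F : ℝ → Ed d → ℝ) (u u' : ℝ → Ed d) : EReal :=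
  (rhoE T Φ u').toEReal + ((∫ t in Icc (0:ℝ) T, F t (u t) : ℝ) : EReal)

/-- The Lagrangian `L` is measurable in `t` for each `(x,y)` and continuously
differentiable in `(x,y)` for a.e. `t`. -/
def CaraL (T : ℝ) (L : ℝ → Ed d → Ed d → ℝ) : Prop :=
  (∀ x y, Measurable fun t => L t x y) ∧
    ∀ᵐ t ∂(volume.restrict (Icc (0:ℝ) T)), ContDiff ℝ 1 fun p : Ed d × Ed d => L t p.1 p.2

/-- The structure condition (S). -/
def CondS (T : ℝ) (Φ : Ed d → ℝ) (L : ℝ → Ed d → Ed d → ℝ) (lam Lam : ℝ) : Prop :=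
  ∃ a : Ed d → ℝ, ∃ b : ℝ → ℝ, Continuous a ∧ (∀ x, 0 ≤ a x) ∧
    IntegrableOn b (Icc (0:ℝ) T) ∧ (∀ t, 0 ≤ b t) ∧
    ∀ᵐ t ∂(volume.restrict (Icc (0:ℝ) T)), ∀ x y,
      |L t x y| + ‖gradient (fun x' => L t x' y) x‖ +
          conjFn Φ (lam⁻¹ • gradient (fun y' => L t x y') y) ≤
        a x * (b t + Φ (Lam⁻¹ • y))

lemma grad_ineq {d : ℕ} {Φ : Ed d → ℝ} (hdiff : Differentiable ℝ Φ)
    (hconv : ConvexOn ℝ Set.univ Φ) (y w : Ed d) :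
    Φ y + ⟪gradient Φ y, w - y⟫ ≤ Φ w := by
  have hA : HasDerivAt (fun t : ℝ => t • (w - y) + y) (w - y) (0 : ℝ) := by
    simpa using ((hasDerivAt_id (0:ℝ)).smul_const (w - y)).add_const y
  have hΦy : HasFDerivAt Φ (fderiv ℝ Φ y) ((fun t : ℝ => t • (w - y) + y) 0) := by
    simpa using (hdiff y).hasFDerivAt
  have hg : HasDerivAt (fun t : ℝ => Φ (t • (w - y) + y)) (fderiv ℝ Φ y (w - y)) 0 :=
    hΦy.comp_hasDerivAt (0:ℝ) hA
  have hgc : ConvexOn ℝ Set.univ (fun t : ℝ => Φ (t • (w - y) + y)) := by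
    have := hconv.comp_affineMap (AffineMap.lineMap y w : ℝ →ᵃ[ℝ] Ed d)
    simp only [Set.preimage_univ] at this
    exact this
  have hs := hgc.le_slope_of_hasDerivAt (Set.mem_univ (0:ℝ)) (Set.mem_univ (1:ℝ))
    one_pos hg
  have hinner : ⟪gradient Φ y, w - y⟫ = fderiv ℝ Φ y (w - y) := by
    simp only [gradient]
    exact InnerProductSpace.toDual_symm_apply
  rw [slope_def_field] at hs
  simp only [one_smul, sub_add_cancel, zero_smul, zero_add] at hs
  rw [hinner]
  have : ((Φ w - Φ y) / (1 - 0) : ℝ) = Φ w - Φ y := by norm_num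
  rw [this] at hs
  linarith

lemma phi_le_scaled {d : ℕ} {Φ : Ed d → ℝ} (hconv : ConvexOn ℝ Set.univ Φ)
    (hpos : ∀ y, 0 ≤ Φ y) (hzero : Φ 0 = 0) {Lam : ℝ} (hL : 0 < Lam) (hL1 : Lam < 1)
    (y : Ed d) : Φ y ≤ Φ (Lam⁻¹ • y) := by
  have h := hconv.2 (Set.mem_univ (Lam⁻¹ • y)) (Set.mem_univ (0 : Ed d))
    hL.le (by linarith : (0:ℝ) ≤ 1 - Lam) (by ring)
  have he : Lam • Lam⁻¹ • y + (1 - Lam) • (0 : Ed d) = y := by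
    rw [smul_smul, mul_inv_cancel₀ hL.ne', one_smul, smul_zero, add_zero]
  rw [he, hzero] at h
  simp only [smul_eq_mul, mul_zero, add_zero] at h
  have := hpos (Lam⁻¹ • y)
  nlinarith

lemma conj_grad_bound {d : ℕ} {Φ : Ed d → ℝ} (hdiff : Differentiable ℝ Φ)
    (hconv : ConvexOn ℝ Set.univ Φ) (hpos : ∀ y, 0 ≤ Φ y)
    {Lam : ℝ} (hL : 0 < Lam) (hL1 : Lam < 1) (y : Ed d) :
    (⨆ w : Ed d, (⟪w, gradient Φ y⟫ - Φ w)) ≤ Lam / (1 - Lam) * Φ (Lam⁻¹ • y) := by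
  set z := gradient Φ y with hz
  have h1m : (0:ℝ) < 1 - Lam := by linarith
  set V := Φ (Lam⁻¹ • y) with hV
  have hVpos := hpos (Lam⁻¹ • y)
  have hApos := hpos y
  -- key bound on ⟪z, y⟫
  have h2 := grad_ineq hdiff hconv y (Lam⁻¹ • y)
  rw [inner_sub_right, real_inner_smul_right] at h2
  set p := (⟪z, y⟫ : ℝ) with hp
  have k1 : Lam * (Lam⁻¹ * p - p) ≤ Lam * (V - Φ y) :=
    mul_le_mul_of_nonneg_left (by linarith) hL.le
  have k2 : Lam * (Lam⁻¹ * p - p) = p - Lam * p := by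
    field_simp
  have key : (1 - Lam) * p ≤ Lam * V := by nlinarith
  have hpb : p ≤ Lam / (1 - Lam) * V := by
    rw [div_mul_eq_mul_div, le_div_iff₀ h1m]
    linarith [key]
  refine ciSup_le fun w => ?_
  have h1 := grad_ineq hdiff hconv y w
  rw [inner_sub_right] at h1
  have hcomm : (⟪w, z⟫ : ℝ) = ⟪z, w⟫ := real_inner_comm z w
  rw [hcomm]
  linarith

/-- For every `0 < Λ < 1` and every `y`,
`Φ*(∇Φ(y)) ≤ (Λ/(1−Λ)) Φ(y/Λ)`; in particular, the Lagrangian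
`L(t,x,y) = Φ(y) + F(t,x)` satisfies the structure condition (S) (with `λ = 1`) for
every `Λ < 1`, whenever `F` satisfies (C) and (A). -/
theorem statement19 {d : ℕ} (Φ : Ed d → ℝ) (hΦ : IsNInf Φ) :
    (∀ Lam : ℝ, 0 < Lam → Lam < 1 → ∀ y : Ed d,
      conjFn Φ (gradient Φ y) ≤ Lam / (1 - Lam) * Φ (Lam⁻¹ • y)) ∧
    ∀ T : ℝ, 0 < T → ∀ F : ℝ → Ed d → ℝ, CondC T F → CondA T F →
      ∀ Lam : ℝ, 0 < Lam → Lam < 1 →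
        CondS T Φ (fun t x y => Φ y + F t x) 1 Lam := by
  obtain ⟨hdiff, hconv, hpos, hzero, -, -, -⟩ := hΦ
  have part1 : ∀ Lam : ℝ, 0 < Lam → Lam < 1 → ∀ y : Ed d,
      conjFn Φ (gradient Φ y) ≤ Lam / (1 - Lam) * Φ (Lam⁻¹ • y) := fun Lam hL hL1 y =>
    conj_grad_bound hdiff hconv hpos hL hL1 y
  refine ⟨part1, ?_⟩
  intro T hT F hC hA Lam hL hL1
  obtain ⟨a, b, hacont, hanonneg, hbint, hbnonneg, hab⟩ := hA
  have h1m : (0:ℝ) < 1 - Lam := by linarith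
  have hc0 : (0:ℝ) < (1 - Lam)⁻¹ := inv_pos.2 h1m
  refine ⟨fun x => a x + (1 - Lam)⁻¹, b, hacont.add continuous_const,
    fun x => by have := hanonneg x; linarith, hbint, hbnonneg, ?_⟩
  filter_upwards [hab] with t hbt
  intro x y
  have hgx : gradient (fun x' => Φ y + F t x') x = gradient (F t) x := by
    simp only [gradient, fderiv_const_add]
  have hgy : gradient (fun y' => Φ y' + F t x) y = gradient Φ y := by
    simp only [gradient, fderiv_add_const]
  simp only [hgx, hgy, inv_one, one_smul]
  have habs : |Φ y + F t x| ≤ Φ y + |F t x| :=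
    (abs_add_le _ _).trans (by rw [abs_of_nonneg (hpos y)])
  have hb' : |F t x| + ‖gradient (F t) x‖ ≤ a x * b t := hbt x
  have hceq : Lam / (1 - Lam) = (1 - Lam)⁻¹ - 1 := by field_simp; ring
  have hconj : conjFn Φ (gradient Φ y) ≤ ((1 - Lam)⁻¹ - 1) * Φ (Lam⁻¹ • y) := by
    rw [← hceq]; exact part1 Lam hL hL1 y
  have hmono : Φ y ≤ Φ (Lam⁻¹ • y) := phi_le_scaled hconv hpos hzero hL hL1 y
  have hΦv : 0 ≤ Φ (Lam⁻¹ • y) := hpos _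
  have hexp : (a x + (1 - Lam)⁻¹) * (b t + Φ (Lam⁻¹ • y)) =
      a x * b t + a x * Φ (Lam⁻¹ • y) + (1 - Lam)⁻¹ * b t + (1 - Lam)⁻¹ * Φ (Lam⁻¹ • y) := by
    ring
  rw [hexp]
  have m1 : 0 ≤ a x * Φ (Lam⁻¹ • y) := mul_nonneg (hanonneg x) hΦv
  have m2 : 0 ≤ (1 - Lam)⁻¹ * b t := mul_nonneg hc0.le (hbnonneg t)
  nlinarith [hconj, hmono, hΦv, habs, hb']
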